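/- arXiv:2109.09068 — 2 statements merged into one kernel-verified Lean document; each statement's English description precedes it below -/
import Mathlib

section
/- Consider the real first-order sigma-delta recursion: e_0 = 0, r_n = x_n - e_{n-1}, y_n = Q_b(r_n), e_n = y_n - r_n with |x_k| ≤ b for all k. Then for every n ≥ 1, the quantization error satisfies the closed form e_n = b - 2b·⟨(n-1)/2 + (1/(2b))·Σ_{k=1}^n x_k⟩, where ⟨·⟩ denotes the fractional part function. -/
/-- The 1-bit quantizer with level `b` (Q_b(0) = b). -/
noncomputable def oneBitQ (b x : ℝ) : ℝ := if x < 0 then -b else b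

lemma oneBitQ_key (b : ℝ) (hb : 0 < b) (r : ℝ) (h1 : -(2*b) ≤ r) (h2 : r < 2*b) :
    oneBitQ b r - r = b - 2*b * Int.fract (r/(2*b)) := by
  have hb2 : (0:ℝ) < 2*b := by linarith
  have hfr : ∀ s : ℝ, Int.fract s = s - ⌊s⌋ := fun s => rfl
  unfold oneBitQ
  by_cases h : r < 0
  · simp only [if_pos h]
    have hfl : ⌊r/(2*b)⌋ = -1 := by
      rw [Int.floor_eq_iff]
      push_cast
      constructor
      · rw [le_div_iff₀ hb2]; linarith
      · rw [div_lt_iff₀ hb2]; linarith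
    rw [hfr, hfl]
    push_cast
    field_simp
    ring
  · simp only [if_neg h]
    push_neg at h
    have hfl : ⌊r/(2*b)⌋ = 0 := by
      rw [Int.floor_eq_iff]
      push_cast
      constructor
      · positivity
      · rw [div_lt_iff₀ hb2]; linarith
    rw [hfr, hfl]
    push_cast
    field_simp
    ring

/-- Closed form for the quantization error of a first-order sigma-delta quantizer
(Lemma 1 of the paper, real part):
e_n = b - 2b⟨(n-1)/2 + (1/(2b))Σ_{k=1}^n x_k⟩. -/
theorem sigmaDelta_error_closed_form (b : ℝ) (hb : 0 < b)
    (x y e r : ℕ → ℝ) (he0 : e 0 = 0)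
    (hx : ∀ k, 1 ≤ k → |x k| ≤ b)
    (hr : ∀ n, 1 ≤ n → r n = x n - e (n - 1))
    (hy : ∀ n, 1 ≤ n → y n = oneBitQ b (r n))
    (he : ∀ n, 1 ≤ n → e n = y n - r n) :
    ∀ n, 1 ≤ n →
      e n = b - 2 * b *
        Int.fract (((n : ℝ) - 1) / 2 + (1 / (2 * b)) * ∑ k ∈ Finset.Icc 1 n, x k) := by
  have hb2 : (0:ℝ) < 2*b := by linarith
  have hb2' : (2*b) ≠ 0 := ne_of_gt hb2
  suffices H : ∀ n, 1 ≤ n →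
      (e n = b - 2 * b *
        Int.fract (((n : ℝ) - 1) / 2 + (1 / (2 * b)) * ∑ k ∈ Finset.Icc 1 n, x k)) ∧
      -b < e n ∧ e n ≤ b by
    intro n hn; exact (H n hn).1
  intro n hn
  induction n, hn using Nat.le_induction with
  | base =>
    have hr1 : r 1 = x 1 := by rw [hr 1 le_rfl]; simp [he0]
    have hxb := abs_le.mp (hx 1 le_rfl)
    have hrl : -(2*b) ≤ r 1 := by rw [hr1]; linarith [hxb.1]
    have hru : r 1 < 2*b := by rw [hr1]; linarith [hxb.2]
    have he1 : e 1 = oneBitQ b (r 1) - r 1 := by rw [he 1 le_rfl, hy 1 le_rfl]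
    have key := oneBitQ_key b hb (r 1) hrl hru
    constructor
    · have harg : (((1:ℕ):ℝ) - 1)/2 + (1/(2*b)) * ∑ k ∈ Finset.Icc 1 1, x k
          = x 1 / (2*b) := by
        rw [Finset.Icc_self, Finset.sum_singleton]; push_cast; ring
      rw [he1, key, hr1, harg]
    · rw [he1]
      unfold oneBitQ
      by_cases h : r 1 < 0
      · simp only [if_pos h]
        rw [hr1] at h ⊢
        constructor <;> linarith [hxb.1, hxb.2]
      · simp only [if_neg h]
        push_neg at h
        rw [hr1] at h ⊢
        constructor <;> linarith [hxb.1, hxb.2]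
  | succ n hn ih =>
    obtain ⟨ihe, ihl, ihu⟩ := ih
    have hn1 : 1 ≤ n + 1 := by omega
    have hrn : r (n+1) = x (n+1) - e n := by rw [hr (n+1) hn1]; simp
    have hxn := abs_le.mp (hx (n+1) hn1)
    have hrl : -(2*b) ≤ r (n+1) := by rw [hrn]; linarith [hxn.1]
    have hru : r (n+1) < 2*b := by rw [hrn]; linarith [hxn.2]
    have hen : e (n+1) = oneBitQ b (r (n+1)) - r (n+1) := by
      rw [he (n+1) hn1, hy (n+1) hn1]
    have key := oneBitQ_key b hb (r (n+1)) hrl hru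
    set u : ℝ := ((n : ℝ) - 1) / 2 + (1 / (2 * b)) * ∑ k ∈ Finset.Icc 1 n, x k with hu
    have hsum : ∑ k ∈ Finset.Icc 1 (n+1), x k = (∑ k ∈ Finset.Icc 1 n, x k) + x (n+1) := by
      rw [Finset.sum_Icc_succ_top hn1]
    have hfru : Int.fract u = u - ⌊u⌋ := rfl
    have hfr : Int.fract ((((n:ℕ):ℝ) + 1 - 1) / 2 + (1 / (2 * b)) * ∑ k ∈ Finset.Icc 1 (n+1), x k)
        = Int.fract (r (n+1) / (2*b)) := by
      rw [Int.fract_eq_fract]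
      refine ⟨⌊u⌋ + 1, ?_⟩
      rw [hsum, hrn, ihe, hfru, hu]
      push_cast
      field_simp
      ring
    have heq : e (n+1) = b - 2 * b *
        Int.fract ((((n:ℕ):ℝ) + 1 - 1) / 2 + (1 / (2 * b)) * ∑ k ∈ Finset.Icc 1 (n+1), x k) := by
      rw [hen, key, hfr]
    have hbnd : -b < e (n+1) ∧ e (n+1) ≤ b := by
      rw [hen]
      unfold oneBitQ
      by_cases h : r (n+1) < 0
      · simp only [if_pos h]; exact ⟨by linarith, by linarith⟩
      · simp only [if_neg h]; push_neg at h; exact ⟨by linarith, by linarith⟩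
    exact ⟨by push_cast at heq ⊢; exact heq, hbnd.1, hbnd.2⟩
end

section
/- Let U⁻¹ be the N×N lower bidiagonal matrix with ones on the diagonal and -1 on the first subdiagonal (the case φ = 0). For a unit-modulus steering vector a(θ) ∈ ℂ^N with entries a_n = e^{-i 2π d (n-1) sin θ}, the squared norm of the filtered vector satisfies ‖U⁻ᴴ a(θ)‖² = 1 + (N-1)·|1 - e^{i 2π d sin θ}|² = 1 + 4(N-1)sin²(π d sin θ). In particular it is minimized over θ at θ = 0 (array broadside), where it equals 1. -/
open Real

/-- Quantization noise shaping of the first-order sigma-delta ADC (φ = 0):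
‖U⁻ᴴ a(θ)‖² = 1 + (N-1)|1 - e^{i2πd sin θ}|² = 1 + 4(N-1)sin²(πd sin θ),
which is minimized at broadside θ = 0, where it equals 1. -/
theorem sigmaDelta_noise_shaping (N : ℕ) (hN : 1 ≤ N) (d : ℝ) (hd : 0 < d) (θ : ℝ) :
    (let a : ℝ → Fin N → ℂ := fun t n =>
      Complex.exp (-Complex.I * (2 * π * d * (n : ℕ) * Real.sin t))
    let B : Matrix (Fin N) (Fin N) ℂ :=
      fun j k => if j = k then 1 else if (j : ℕ) = (k : ℕ) + 1 then -1 else 0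
    let f : ℝ → ℝ := fun t => ∑ i, ‖(B.conjTranspose.mulVec (a t)) i‖ ^ 2
    f θ = 1 + ((N : ℝ) - 1) *
        ‖1 - Complex.exp (Complex.I * (2 * π * d * Real.sin θ))‖ ^ 2 ∧
      f θ = 1 + 4 * ((N : ℝ) - 1) * Real.sin (π * d * Real.sin θ) ^ 2 ∧
      f 0 ≤ f θ ∧ f 0 = 1) := by
  intro a B f
  obtain ⟨m, rfl⟩ : ∃ m, N = m + 1 := ⟨N - 1, (Nat.succ_pred_eq_of_pos hN).symm⟩
  -- mulVec formula
  have hmul : ∀ (v : Fin (m+1) → ℂ) (i : Fin (m+1)), B.conjTranspose.mulVec v i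
      = v i - (if h : (i:ℕ) + 1 < m + 1 then v ⟨(i:ℕ)+1, h⟩ else 0) := by
    intro v i
    have hstep : ∀ k : Fin (m+1), star (B k i) * v k
        = (if k = i then v k else 0) + (if (k:ℕ) = (i:ℕ)+1 then -v k else 0) := by
      intro k
      by_cases h1 : k = i
      · subst h1; simp [B]
      · by_cases h2 : (k:ℕ) = (i:ℕ)+1
        · simp [B, h1, h2]
        · simp [B, h1, h2]
    have : B.conjTranspose.mulVec v i = ∑ k, star (B k i) * v k := by
      simp [Matrix.mulVec, Matrix.conjTranspose, dotProduct]
    rw [this]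
    simp only [hstep, Finset.sum_add_distrib]
    rw [Finset.sum_ite_eq' Finset.univ i (fun k => v k)]
    simp only [Finset.mem_univ, if_true]
    congr 1
    by_cases h : (i:ℕ) + 1 < m + 1
    · rw [dif_pos h]
      have hc : ∀ k : Fin (m+1), ((k:ℕ) = (i:ℕ)+1) = (k = (⟨(i:ℕ)+1, h⟩ : Fin (m+1))) := by
        intro k; simp [Fin.ext_iff]
      simp only [hc]
      rw [Finset.sum_ite_eq' Finset.univ (⟨(i:ℕ)+1, h⟩ : Fin (m+1)) (fun k => -v k)]
      simp only [Finset.mem_univ, if_true]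
      ring
    · rw [dif_neg h]
      have : ∀ k : Fin (m+1), ¬ ((k:ℕ) = (i:ℕ)+1) := by
        intro k hk
        exact h (hk ▸ k.isLt)
      simp [this]
  have habs1 : ∀ t (n : Fin (m+1)), ‖a t n‖ = 1 := by
    intro t n
    have : a t n = Complex.exp ((↑(-(2*π*d*(n:ℕ)*Real.sin t)) : ℂ) * Complex.I) := by
      simp only [a]; congr 1; push_cast; ring
    rw [this, Complex.norm_exp_ofReal_mul_I]
  have hstepa : ∀ t (i : Fin (m+1)) (h : (i:ℕ)+1 < m+1),
      a t ⟨(i:ℕ)+1, h⟩ = a t i * Complex.exp (-Complex.I * (2*π*d*Real.sin t)) := by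
    intro t i h
    simp only [a]
    rw [← Complex.exp_add]
    congr 1
    push_cast
    ring
  -- the key value of f
  have hf : ∀ t, f t = (m:ℝ) * ‖1 - Complex.exp (-Complex.I * (2*π*d*Real.sin t))‖^2 + 1 := by
    intro t
    have hg : ∀ i : Fin (m+1), ‖(B.conjTranspose.mulVec (a t)) i‖ ^ 2
        = if (i:ℕ) + 1 < m + 1
          then ‖1 - Complex.exp (-Complex.I * (2*π*d*Real.sin t))‖^2 else 1 := by
      intro i
      rw [hmul]
      by_cases h : (i:ℕ) + 1 < m + 1
      · rw [dif_pos h, if_pos h, hstepa t i h]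
        have : a t i - a t i * Complex.exp (-Complex.I * (2*π*d*Real.sin t))
            = a t i * (1 - Complex.exp (-Complex.I * (2*π*d*Real.sin t))) := by ring
        rw [this, norm_mul, habs1]
        ring
      · rw [dif_neg h, if_neg h, sub_zero, habs1]
        norm_num
    show (∑ i, ‖(B.conjTranspose.mulVec (a t)) i‖ ^ 2) = _
    simp only [hg]
    rw [Fin.sum_univ_castSucc]
    simp [Fin.is_lt, mul_comm]
  -- |1 - e^{iφ}| = |1 - e^{-iφ}|
  have habsconj : ∀ x : ℝ, ‖1 - Complex.exp (Complex.I * x)‖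
      = ‖1 - Complex.exp (-Complex.I * x)‖ := by
    intro x
    rw [← Complex.norm_conj]
    congr 1
    rw [map_sub, map_one, ← Complex.exp_conj]
    congr 1
    simp [Complex.ext_iff]
  -- |1 - e^{-i 2y}|² = 4 sin² y
  have h4 : ∀ y : ℝ, ‖1 - Complex.exp (-Complex.I * ((2*y : ℝ) : ℂ))‖^2
      = 4 * Real.sin y ^ 2 := by
    intro y
    rw [Complex.sq_norm, Complex.normSq_apply]
    have hz : (-Complex.I * ((2*y : ℝ) : ℂ)) = ((-(2*y) : ℝ) : ℂ) * Complex.I := by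
      push_cast; ring
    rw [hz, Complex.sub_re, Complex.sub_im, Complex.one_re, Complex.one_im,
      Complex.exp_ofReal_mul_I_re, Complex.exp_ofReal_mul_I_im, Real.cos_neg, Real.sin_neg]
    rw [Real.cos_two_mul, Real.sin_two_mul]
    nlinarith [Real.sin_sq_add_cos_sq y]
  have hf2 : ∀ t, f t = 1 + 4 * ((m:ℝ)) * Real.sin (π * d * Real.sin t) ^ 2 := by
    intro t
    rw [hf t]
    have h2y : (2 * π * d * Real.sin t : ℂ) = ((2 * (π * d * Real.sin t) : ℝ) : ℂ) := by
      push_cast; ring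
    rw [h2y, h4 (π * d * Real.sin t)]
    ring
  refine ⟨?_, ?_, ?_, ?_⟩
  · rw [hf θ]
    have h2y : (2 * π * d * Real.sin θ : ℂ) = (((2 * π * d * Real.sin θ : ℝ)) : ℂ) := by
      push_cast; ring
    rw [h2y, habsconj (2 * π * d * Real.sin θ), ← h2y]
    push_cast
    ring
  · rw [hf2 θ]; push_cast; ring
  · rw [hf2 0, hf2 θ]
    simp only [Real.sin_zero, mul_zero, Real.sin_zero]
    nlinarith [sq_nonneg (Real.sin (π * d * Real.sin θ)), Nat.cast_nonneg (α := ℝ) m]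
  · rw [hf2 0]
    simp
end
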